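/- If G is a connected simple graph which is not an extended star graph, then χᵒ(G) is even if and only if the vertex chromatic number χ(G) equals 2 (i.e., G is bipartite). -/

import Mathlib

open SimpleGraph Function

/-- A circular `k`-colouring of the oriented edges of `G`: every colour class is nonempty
(on adjacent pairs), and the colour increases by one along every non-backtracking step. -/
def IsCircularColoring {V : Type*} (G : SimpleGraph V) (k : ℕ) (c : V → V → ZMod k) : Prop :=
  (∀ j : ZMod k, ∃ v w, G.Adj v w ∧ c v w = j) ∧
  ∀ v w z, G.Adj v w → G.Adj w z → z ≠ v → c w z = c v w + 1

/-- `G` is circularly `k`-partite. -/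
def CircularlyPartite {V : Type*} (G : SimpleGraph V) (k : ℕ) : Prop :=
  0 < k ∧ ∃ c : V → V → ZMod k, IsCircularColoring G k c

/-- The oriented edge periodic colouring number: the largest `k` such that `G` is
circularly `k`-partite. -/
noncomputable def chiO {V : Type*} (G : SimpleGraph V) : ℕ :=
  sSup {k | CircularlyPartite G k}

/-- `G` is a path graph. -/
def IsPathGraph {V : Type*} (G : SimpleGraph V) : Prop :=
  ∃ n, Nonempty (G ≃g pathGraph n)

/-- `G` is an extended star graph: a tree with exactly one vertex of degree at least 3. -/
def IsExtendedStar {V : Type*} [Fintype V] (G : SimpleGraph V) [DecidableRel G.Adj] : Prop :=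
  G.IsTree ∧ ∃! v : V, 3 ≤ G.degree v

/-- A (not necessarily proper) vertex colouring is `t`-periodic if every path of length `t`
has endpoints of the same colour. -/
def IsPeriodicColoring {V : Type*} (G : SimpleGraph V) (t : ℕ) {α : Type*} (c : V → α) : Prop :=
  ∀ (u v : V) (p : G.Walk u v), p.IsPath → p.length = t → c u = c v

/-- The vertex `t`-periodic colouring number: the largest `k` such that `G` admits a
`t`-periodic colouring using exactly `k` colours. -/
noncomputable def chiT {V : Type*} (G : SimpleGraph V) (t : ℕ) : ℕ :=
  sSup {k | ∃ c : V → Fin k, Surjective c ∧ IsPeriodicColoring G t c}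

/-- A proper edge colouring: distinct edges sharing an endpoint get distinct colours. -/
def IsProperEdgeColoring {V : Type*} (G : SimpleGraph V) {α : Type*} (c : G.edgeSet → α) : Prop :=
  ∀ e f : G.edgeSet, e ≠ f → (∃ v, v ∈ (e : Sym2 V) ∧ v ∈ (f : Sym2 V)) → c e ≠ c f

/-- The edge chromatic number of `G`. -/
noncomputable def chiStar {V : Type*} (G : SimpleGraph V) : ℕ :=
  sInf {k | ∃ c : G.edgeSet → Fin k, IsProperEdgeColoring G c}

namespace CircAux

variable {V : Type*} {G : SimpleGraph V}

/-- Take the first `i` darts of a walk. -/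
def takeW {u v : V} : (p : G.Walk u v) → (i : ℕ) → G.Walk u (p.getVert i)
  | .nil, _ => .nil
  | .cons _ _, 0 => .nil
  | .cons h q, (i+1) => .cons h (takeW q i)

lemma length_takeW {u v : V} (p : G.Walk u v) (i : ℕ) (h : i ≤ p.length) :
    (takeW p i).length = i := by
  induction p generalizing i with
  | nil => simp at h; simp [h, takeW]
  | cons hadj q ih =>
    cases i with
    | zero => rfl
    | succ n =>
      simp only [Walk.length_cons, Nat.add_le_add_iff_right] at h
      simp [takeW, ih n h]

lemma length_drop {u v : V} (p : G.Walk u v) (i : ℕ) :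
    (p.drop i).length = p.length - i := by
  induction p generalizing i with
  | nil => cases i <;> simp [Walk.drop]
  | cons hadj q ih =>
    cases i with
    | zero => simp [Walk.drop]
    | succ n => simpa [Walk.drop] using ih n

lemma getVert_drop {u v : V} (p : G.Walk u v) (i j : ℕ) :
    (p.drop i).getVert j = p.getVert (i + j) := by
  induction p generalizing i with
  | nil => cases i <;> rfl
  | cons hadj q ih =>
    cases i with
    | zero => simp [Walk.drop]
    | succ n =>
      simp only [Walk.drop, Walk.getVert_copy, Walk.getVert_cons_succ]
      rw [ih n, show n+1+j = (n+j)+1 from by omega, Walk.getVert_cons_succ]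

/-- the colour advance lemma along a non-backtracking walk -/
lemma advance {k : ℕ} {c : V → V → ZMod k}
    (hc : ∀ v w z, G.Adj v w → G.Adj w z → z ≠ v → c w z = c v w + 1)
    {u v : V} (p : G.Walk u v)
    (hnb : ∀ i, i + 2 ≤ p.length → p.getVert (i + 2) ≠ p.getVert i) :
    ∀ i, i + 1 ≤ p.length →
      c (p.getVert i) (p.getVert (i + 1)) = c (p.getVert 0) (p.getVert 1) + i := by
  intro i
  induction i with
  | zero => intro _; simp
  | succ n ih =>
    intro h
    have h1 : n + 1 ≤ p.length := by omega
    have h2 := hc (p.getVert n) (p.getVert (n+1)) (p.getVert (n+2))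
      (p.adj_getVert_succ (by omega)) (p.adj_getVert_succ (by omega)) (hnb n (by omega))
    show c (p.getVert (n+1)) (p.getVert (n+2)) = _
    rw [h2, ih h1]
    push_cast
    ring



lemma support_getElem {u v : V} (p : G.Walk u v) (i : ℕ) (h : i < p.support.length) :
    p.support[i] = p.getVert i := by
  induction p generalizing i with
  | nil =>
    simp only [Walk.support_nil, List.length_singleton] at h
    interval_cases i
    rfl
  | cons hadj q ih =>
    cases i with
    | zero => rfl
    | succ n =>
      simp only [Walk.support_cons, List.length_cons, Nat.add_lt_add_iff_right] at h
      simp only [Walk.support_cons, List.getElem_cons_succ, Walk.getVert_cons_succ]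
      exact ih n h

lemma path_nb {u v : V} {p : G.Walk u v} (hp : p.IsPath) :
    ∀ i, i + 2 ≤ p.length → p.getVert (i + 2) ≠ p.getVert i := by
  intro i hi
  have hlen := p.length_support
  have h1 : i + 2 < p.support.length := by omega
  have h2 : i < p.support.length := by omega
  rw [← support_getElem p _ h1, ← support_getElem p _ h2]
  intro hcontra
  have := hp.support_nodup.getElem_inj_iff.mp hcontra
  omega

lemma cycle_getVert_inj {a : V} {W : G.Walk a a} (hW : W.IsCycle)
    {i j : ℕ} (hi1 : 1 ≤ i) (hi2 : i ≤ W.length) (hj1 : 1 ≤ j) (hj2 : j ≤ W.length)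
    (hij : W.getVert i = W.getVert j) : i = j := by
  have hlen := W.length_support
  have htl : W.support.tail.length = W.length := by
    rw [List.length_tail, hlen]; omega
  have h1 : i - 1 < W.support.tail.length := by omega
  have h2 : j - 1 < W.support.tail.length := by omega
  have e1 : W.support.tail[i-1] = W.getVert i := by
    rw [List.getElem_tail, support_getElem W _ (by omega)]
    congr 1
    omega
  have e2 : W.support.tail[j-1] = W.getVert j := by
    rw [List.getElem_tail, support_getElem W _ (by omega)]
    congr 1
    omega
  have : W.support.tail[i-1] = W.support.tail[j-1] := by rw [e1, e2, hij]
  have := hW.support_nodup.getElem_inj_iff.mp this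
  omega

lemma cycle_nb {a : V} {W : G.Walk a a} (hW : W.IsCycle) :
    ∀ i, i + 2 ≤ W.length → W.getVert (i + 2) ≠ W.getVert i := by
  intro i hi hcontra
  have h3 := hW.three_le_length
  rcases Nat.eq_zero_or_pos i with rfl | hpos
  · have h0 : W.getVert 0 = W.getVert W.length := by
      rw [W.getVert_zero, W.getVert_length]
    rw [h0] at hcontra
    have := cycle_getVert_inj hW (by omega) (by omega) (by omega) (le_refl _) hcontra
    omega
  · have := cycle_getVert_inj hW (by omega) (by omega) (by omega) (by omega) hcontra
    omega

lemma cycle_wrap {a : V} {W : G.Walk a a} (hW : W.IsCycle) :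
    W.getVert 1 ≠ W.getVert (W.length - 1) := by
  intro hcontra
  have h3 := hW.three_le_length
  have := cycle_getVert_inj hW (le_refl _) (by omega) (by omega) (by omega) hcontra
  omega

/-- divisibility from a non-backtracking closed walk -/
lemma closed_dvd {k : ℕ} {c : V → V → ZMod k}
    (hc : ∀ v w z, G.Adj v w → G.Adj w z → z ≠ v → c w z = c v w + 1)
    {a : V} (W : G.Walk a a) (h3 : 3 ≤ W.length)
    (hnb : ∀ i, i + 2 ≤ W.length → W.getVert (i + 2) ≠ W.getVert i)
    (hwrap : W.getVert 1 ≠ W.getVert (W.length - 1)) :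
    (k : ℕ) ∣ W.length := by
  set L := W.length with hL
  have hlast : c (W.getVert (L - 1)) (W.getVert L) = c (W.getVert 0) (W.getVert 1) + (L - 1 : ℕ) := by
    have := advance hc W hnb (L - 1) (by omega)
    rwa [show L - 1 + 1 = L from by omega] at this
  have hadj1 : G.Adj (W.getVert (L - 1)) (W.getVert L) := by
    have := W.adj_getVert_succ (i := L - 1) (by omega)
    rwa [show L - 1 + 1 = L from by omega] at this
  have hadj2 : G.Adj (W.getVert L) (W.getVert 1) := by
    have h0 : W.getVert L = W.getVert 0 := by rw [W.getVert_zero, W.getVert_length]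
    rw [h0]
    exact W.adj_getVert_succ (by omega)
  have hwr := hc _ _ _ hadj1 hadj2 hwrap
  have h0 : W.getVert L = W.getVert 0 := by rw [W.getVert_zero, W.getVert_length]
  rw [h0] at hlast hwr
  rw [hlast] at hwr
  have hL1 : (((L - 1 : ℕ) : ZMod k) + 1) = (L : ZMod k) := by
    push_cast [Nat.cast_sub (show 1 ≤ L from by omega)]
    ring
  rw [add_assoc, hL1] at hwr
  have hzero : ((L : ℕ) : ZMod k) = 0 := (left_eq_add.mp hwr)
  exact (ZMod.natCast_eq_zero_iff L k).mp hzero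


lemma side_walk {s : V → ZMod 2} (hs : ∀ v w, G.Adj v w → s w = s v + 1)
    {u v : V} (p : G.Walk u v) : s v = s u + p.length := by
  induction p with
  | nil => simp
  | cons h q ih =>
    rw [Walk.length_cons, ih, hs _ _ h]
    push_cast
    ring

lemma closed_ne_one {a : V} (W : G.Walk a a) : W.length ≠ 1 := by
  intro h1
  cases W with
  | nil => simp at h1
  | cons hadj q =>
    simp only [Walk.length_cons] at h1
    have hq0 : q.length = 0 := by omega
    have := Walk.eq_of_length_eq_zero hq0
    subst this
    exact G.irrefl hadj

lemma exists_nb_odd_closed (h : ∃ (a : V) (W : G.Walk a a), Odd W.length) :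
    ∃ (a : V) (W : G.Walk a a), Odd W.length ∧ 3 ≤ W.length ∧
      (∀ i, i + 2 ≤ W.length → W.getVert (i + 2) ≠ W.getVert i) ∧
      W.getVert 1 ≠ W.getVert (W.length - 1) := by
  have hP : ∃ n, ∃ (a : V) (W : G.Walk a a), W.length = n ∧ Odd n := by
    obtain ⟨a, W, hW⟩ := h
    exact ⟨W.length, a, W, rfl, hW⟩
  classical
  obtain ⟨a, W, hlen, hodd⟩ := Nat.find_spec hP
  set n₀ := Nat.find hP with hn₀
  have hmin : ∀ m, m < n₀ → ¬ ∃ (a : V) (W : G.Walk a a), W.length = m ∧ Odd m :=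
    fun m hm => Nat.find_min hP hm
  have h3 : 3 ≤ W.length := by
    have h1 := closed_ne_one W
    rw [hlen] at h1 ⊢
    rcases hodd with ⟨t, ht⟩
    omega
  refine ⟨a, W, by rw [hlen]; exact hodd, h3, ?_, ?_⟩
  · intro i hi hcontra
    -- excise
    let W1 := (takeW W i).append (((W.drop (i+2)).copy hcontra rfl))
    have hlen1 : W1.length = W.length - 2 := by
      simp only [W1, Walk.length_append, Walk.length_copy, length_takeW W i (by omega),
        length_drop]
      omega
    apply hmin (W.length - 2) (by omega)
    exact ⟨a, W1, by rw [hlen1, hlen], by rcases hodd with ⟨t, ht⟩; rw [hlen]; exact ⟨t - 1, by omega⟩⟩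
  · intro hcontra
    -- wrap excision: middle part from getVert 1 to getVert (L-1)
    have e1 : (W.drop 1).getVert (W.length - 2) = W.getVert (W.length - 1) := by
      rw [getVert_drop]
      congr 1
      omega
    let M := (takeW (W.drop 1) (W.length - 2)).copy rfl (e1.trans hcontra.symm)
    have hlenM : M.length = W.length - 2 := by
      simp only [M, Walk.length_copy]
      rw [length_takeW]
      rw [length_drop]
      omega
    apply hmin (W.length - 2) (by omega)
    exact ⟨W.getVert 1, M, by rw [hlenM, hlen], by rcases hodd with ⟨t, ht⟩; rw [hlen]; exact ⟨t - 1, by omega⟩⟩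



section Deg
variable [Fintype V] [DecidableRel G.Adj]

lemma third_neighbor {u x y : V} (hu : 3 ≤ G.degree u) :
    ∃ z, G.Adj u z ∧ z ≠ x ∧ z ≠ y := by
  classical
  have hns : ¬ (G.neighborFinset u ⊆ {x, y}) := by
    intro hsub
    have hcle := Finset.card_le_card hsub
    have h2 : ({x, y} : Finset V).card ≤ 2 := Finset.card_insert_le _ _ |>.trans (by simp)
    rw [SimpleGraph.card_neighborFinset_eq_degree] at hcle
    omega
  obtain ⟨z, hz1, hz2⟩ := Finset.not_subset.mp hns
  simp only [SimpleGraph.mem_neighborFinset] at hz1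
  simp only [Finset.mem_insert, Finset.mem_singleton, not_or] at hz2
  exact ⟨z, hz1, hz2.1, hz2.2⟩

variable {k : ℕ} {c : V → V → ZMod k}

lemma incoming_eq (hc : ∀ v w z, G.Adj v w → G.Adj w z → z ≠ v → c w z = c v w + 1)
    {u x y : V} (hu : 3 ≤ G.degree u) (hx : G.Adj x u) (hy : G.Adj y u) :
    c x u = c y u := by
  by_cases hxy : x = y
  · rw [hxy]
  · obtain ⟨z, hz, hzx, hzy⟩ := third_neighbor hu (x := x) (y := y)
    have h1 := hc x u z hx hz hzx
    have h2 := hc y u z hy hz hzy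
    rw [h1] at h2
    exact add_right_cancel h2

lemma outgoing (hc : ∀ v w z, G.Adj v w → G.Adj w z → z ≠ v → c w z = c v w + 1)
    {u x w : V} (hu : 3 ≤ G.degree u) (hx : G.Adj x u) (hw : G.Adj u w) :
    c u w = c x u + 1 := by
  obtain ⟨z, hz, hzx, hzw⟩ := third_neighbor hu (x := x) (y := w)
  have h1 := hc z u w hz.symm hw (fun h => hzw h.symm)
  rw [h1, incoming_eq hc hu hz.symm hx]

/-- Colour values along the double traversal of a path between two branch vertices. -/
lemma branch_values (hc : ∀ v w z, G.Adj v w → G.Adj w z → z ≠ v → c w z = c v w + 1)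
    {u₁ u₂ : V} (h1 : 3 ≤ G.degree u₁) (h2 : 3 ≤ G.degree u₂)
    {x : V} (hx : G.Adj x u₁)
    (P : G.Walk u₁ u₂) (hP : P.IsPath) (hm : 0 < P.length) :
    (∀ t, t < 2 * P.length → ∃ v w, G.Adj v w ∧ c v w = c x u₁ + 1 + t) ∧
      ((2 * P.length : ℕ) : ZMod k) = 0 := by
  set m := P.length with hmdef
  -- base of P
  have hadj01 : G.Adj u₁ (P.getVert 1) := by
    have := P.adj_getVert_succ (i := 0) (by omega)
    rwa [P.getVert_zero] at this
  have hbaseP : c (P.getVert 0) (P.getVert 1) = c x u₁ + 1 := by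
    rw [P.getVert_zero]
    exact outgoing hc h1 hx hadj01
  have hadvP : ∀ i, i + 1 ≤ m → c (P.getVert i) (P.getVert (i+1)) = c x u₁ + 1 + i := by
    intro i hi
    rw [advance hc P (path_nb hP) i hi, hbaseP]
  -- last dart of P
  have hadjlast : G.Adj (P.getVert (m - 1)) u₂ := by
    have := P.adj_getVert_succ (i := m - 1) (by omega)
    rwa [show m - 1 + 1 = m from by omega, P.getVert_length] at this
  have hlastP : c (P.getVert (m - 1)) u₂ = c x u₁ + m := by
    have := hadvP (m - 1) (by omega)
    rw [show m - 1 + 1 = m from by omega, P.getVert_length] at this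
    rw [this]
    push_cast [Nat.cast_sub (show 1 ≤ m from by omega)]
    ring
  -- the reverse path
  set Q := P.reverse with hQdef
  have hQP : Q.IsPath := hP.reverse
  have hQlen : Q.length = m := P.length_reverse
  have hadjQ01 : G.Adj u₂ (Q.getVert 1) := by
    have := Q.adj_getVert_succ (i := 0) (by omega)
    rwa [Q.getVert_zero] at this
  have hbaseQ : c (Q.getVert 0) (Q.getVert 1) = c x u₁ + 1 + m := by
    rw [Q.getVert_zero]
    rw [outgoing hc h2 hadjlast hadjQ01, hlastP]
    ring
  have hadvQ : ∀ i, i + 1 ≤ m → c (Q.getVert i) (Q.getVert (i+1)) = c x u₁ + 1 + m + i := by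
    intro i hi
    rw [advance hc Q (path_nb hQP) i (by omega), hbaseQ]
  -- closing relation
  have hadjQlast : G.Adj (Q.getVert (m - 1)) u₁ := by
    have := Q.adj_getVert_succ (i := m - 1) (by omega)
    have e : Q.getVert m = u₁ := by rw [← hQlen]; exact Q.getVert_length
    rwa [show m - 1 + 1 = m from by omega, e] at this
  have e : Q.getVert m = u₁ := by rw [← hQlen]; exact Q.getVert_length
  have hclose : c x u₁ = c x u₁ + ((2 * m : ℕ) : ZMod k) := by
    have h5 := hadvQ (m - 1) (by omega)
    rw [show m - 1 + 1 = m from by omega, e] at h5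
    have h6 := incoming_eq hc h1 hadjQlast hx
    rw [h6] at h5
    nth_rewrite 1 [h5]
    push_cast [Nat.cast_sub (show 1 ≤ m from by omega)]
    ring
  constructor
  · intro t ht
    by_cases htm : t < m
    · exact ⟨P.getVert t, P.getVert (t+1), P.adj_getVert_succ htm, hadvP t (by omega)⟩
    · refine ⟨Q.getVert (t - m), Q.getVert (t - m + 1),
        Q.adj_getVert_succ (by omega), ?_⟩
      rw [hadvQ (t - m) (by omega)]
      push_cast [Nat.cast_sub (show m ≤ t from by omega)]
      ring
  · exact (left_eq_add.mp hclose)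
end Deg



section PathCase
variable [Fintype V] [DecidableRel G.Adj]

lemma path_case (hG : G.Connected) (htree : G.IsTree) (hdeg : ∀ u, G.degree u ≤ 2)
    (hcard : 2 ≤ Fintype.card V)
    {s : V → ZMod 2} (hs : ∀ v w, G.Adj v w → s w = s v + 1) :
    CircularlyPartite G (2 * (Fintype.card V - 1)) := by
  classical
  set n := Fintype.card V - 1 with hn
  have hn1 : 1 ≤ n := by omega
  have hdegpos : ∀ v, 0 < G.degree v := by
    intro v
    rw [SimpleGraph.degree_pos_iff_exists_adj]
    obtain ⟨w, hw⟩ := Fintype.exists_ne_of_one_lt_card (by omega) v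
    obtain ⟨p⟩ := hG.preconnected v w
    have hp : p.length ≠ 0 := fun h0 => hw (Walk.eq_of_length_eq_zero h0).symm
    have := p.adj_getVert_succ (i := 0) (by omega)
    rw [p.getVert_zero] at this
    exact ⟨_, this⟩
  have hleaf : ∃ r, G.degree r = 1 := by
    by_contra hno
    push_neg at hno
    have hall : ∀ v, 2 ≤ G.degree v := by
      intro v
      have h1 := hdegpos v
      have h2 := hno v
      omega
    have hsum := G.sum_degrees_eq_twice_card_edges
    have hedges : G.edgeFinset.card + 1 = Fintype.card V := htree.card_edgeFinset
    have hge : (Fintype.card V) * 2 ≤ ∑ v, G.degree v := by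
      calc (Fintype.card V) * 2 = ∑ _v : V, 2 := by
            rw [Finset.sum_const, Finset.card_univ, smul_eq_mul]
        _ ≤ ∑ v, G.degree v := Finset.sum_le_sum (fun i _ => hall i)
    omega
  obtain ⟨r, hr⟩ := hleaf
  have hreach : ∀ v, G.Reachable r v := fun v => hG.preconnected r v
  have hdbound : ∀ v, G.dist r v ≤ n := by
    intro v
    obtain ⟨p, hp⟩ := (hreach v).exists_walk_length_eq_dist
    have h1 : G.dist r v ≤ p.bypass.length := SimpleGraph.dist_le _
    have h2 := p.bypass_isPath.length_lt
    omega
  have hside : ∀ u, s u = s r + (G.dist r u : ZMod 2) := by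
    intro u
    obtain ⟨p, hp⟩ := (hreach u).exists_walk_length_eq_dist
    have hsw := side_walk hs p
    rwa [hp] at hsw
  have hadj_dist : ∀ v w, G.Adj v w →
      (G.dist r w = G.dist r v + 1 ∨ G.dist r v = G.dist r w + 1) := by
    intro v w hvw
    have hne : G.dist r v ≠ G.dist r w := by
      intro heq
      have h1 := hside v
      have h2 := hside w
      have h3 := hs v w hvw
      rw [h1, h2, heq] at h3
      simp [left_eq_add] at h3
    have hvw1 : G.dist v w ≤ 1 := by
      have := SimpleGraph.dist_le (Walk.cons hvw Walk.nil)
      simpa using this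
    have hwv1 : G.dist w v ≤ 1 := by
      have := SimpleGraph.dist_le (Walk.cons hvw.symm Walk.nil)
      simpa using this
    have ht1 : G.dist r w ≤ G.dist r v + G.dist v w := hG.dist_triangle
    have ht2 : G.dist r v ≤ G.dist r w + G.dist w v := hG.dist_triangle
    omega
  have hpred : ∀ v, 0 < G.dist r v → ∃ u, G.Adj u v ∧ G.dist r u + 1 = G.dist r v := by
    intro v hv
    obtain ⟨p, hp⟩ := (hreach v).exists_walk_length_eq_dist
    have hplen : 0 < p.length := by omega
    set q := p.reverse with hq
    have hqlen : q.length = p.length := p.length_reverse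
    have hadj : G.Adj v (q.getVert 1) := by
      have := q.adj_getVert_succ (i := 0) (by omega)
      rwa [q.getVert_zero] at this
    have hdle : G.dist r (q.getVert 1) ≤ p.length - 1 := by
      have h1 := SimpleGraph.dist_le (q.drop 1).reverse
      rwa [Walk.length_reverse, length_drop, hqlen] at h1
    have hdge : G.dist r v ≤ G.dist r (q.getVert 1) + 1 := by
      have ht : G.dist r v ≤ G.dist r (q.getVert 1) + G.dist (q.getVert 1) v :=
        hG.dist_triangle
      have h1 : G.dist (q.getVert 1) v ≤ 1 := by
        have := SimpleGraph.dist_le (Walk.cons hadj.symm Walk.nil)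
        simpa using this
      omega
    exact ⟨q.getVert 1, hadj.symm, by omega⟩
  set D : ℕ → Finset V := fun i => Finset.univ.filter (fun v => G.dist r v = i) with hD
  have hmemD : ∀ x i, x ∈ D i ↔ G.dist r x = i := by
    intro x i
    simp [hD, Finset.mem_filter]
  have hDcard0 : (D 0).card ≤ 1 := by
    apply Finset.card_le_one.mpr
    intro a ha b hb
    rw [hmemD] at ha hb
    have h1 := (hG.dist_eq_zero_iff).mp ha
    have h2 := (hG.dist_eq_zero_iff).mp hb
    rw [← h1, ← h2]
  have hstep : ∀ i, (D (i+1)).card ≤ (D i).card := by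
    intro i
    set f : V → V := fun x => if h : 0 < G.dist r x then Classical.choose (hpred x h) else r
      with hf
    have hfspec : ∀ x, 0 < G.dist r x → G.Adj (f x) x ∧ G.dist r (f x) + 1 = G.dist r x := by
      intro x hx
      simp only [hf, dif_pos hx]
      exact Classical.choose_spec (hpred x hx)
    apply Finset.card_le_card_of_injOn f
    · intro x hx
      rw [Finset.mem_coe, hmemD] at hx
      rw [Finset.mem_coe, hmemD]
      have := hfspec x (by omega)
      omega
    · intro x hx y hy hxy
      rw [Finset.mem_coe, hmemD] at hx hy
      by_contra hne
      have hfx := hfspec x (by omega)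
      have hfy := hfspec y (by omega)
      have hux : G.Adj (f x) x := hfx.1
      have huy : G.Adj (f x) y := by rw [hxy]; exact hfy.1
      have hdu : G.dist r (f x) = i := by omega
      rcases Nat.eq_zero_or_pos i with hi0 | hipos
      · have hur : f x = r := by
          rw [hi0] at hdu
          exact ((hG.dist_eq_zero_iff).mp hdu).symm
        have hsub : ({x, y} : Finset V) ⊆ G.neighborFinset r := by
          intro a ha
          simp only [Finset.mem_insert, Finset.mem_singleton] at ha
          rw [SimpleGraph.mem_neighborFinset]
          rcases ha with rfl | rfl
          · exact hur ▸ hux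
          · exact hur ▸ huy
        have hcle := Finset.card_le_card hsub
        rw [Finset.card_pair hne, SimpleGraph.card_neighborFinset_eq_degree] at hcle
        omega
      · obtain ⟨w', hw'1, hw'2⟩ := hpred (f x) (by omega)
        have hsub : ({x, y, w'} : Finset V) ⊆ G.neighborFinset (f x) := by
          intro a ha
          simp only [Finset.mem_insert, Finset.mem_singleton] at ha
          rw [SimpleGraph.mem_neighborFinset]
          rcases ha with rfl | rfl | rfl
          · exact hux
          · exact huy
          · exact hw'1.symm
        have hcard3 : ({x, y, w'} : Finset V).card = 3 := by
          have hxw' : x ≠ w' := by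
            intro hcon
            rw [← hcon] at hw'2
            omega
          have hyw' : y ≠ w' := by
            intro hcon
            rw [← hcon] at hw'2
            omega
          rw [Finset.card_insert_of_notMem (by simp [hne, hxw']),
            Finset.card_pair hyw']
        have hcle := Finset.card_le_card hsub
        rw [hcard3, SimpleGraph.card_neighborFinset_eq_degree] at hcle
        have := hdeg (f x)
        omega
  have hDcard : ∀ i, (D i).card ≤ 1 := by
    intro i
    induction i with
    | zero => exact hDcard0
    | succ j ih => exact (hstep j).trans ih
  have hnonempty : ∀ i, i ≤ n → (D i).Nonempty := by
    intro i0 hi0n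
    by_contra hi0
    have hi0' : (D i0).card = 0 := by
      rw [Finset.card_eq_zero]
      exact Finset.not_nonempty_iff_eq_empty.mp hi0
    have hcover : (Finset.univ : Finset V) ⊆ (Finset.range (n+1)).biUnion D := by
      intro v _
      rw [Finset.mem_biUnion]
      exact ⟨G.dist r v, Finset.mem_range.mpr (by have := hdbound v; omega),
        (hmemD v _).mpr rfl⟩
    have hle := Finset.card_le_card hcover
    have hble := Finset.card_biUnion_le (s := Finset.range (n+1)) (t := D)
    have hmem : i0 ∈ Finset.range (n+1) := by
      rw [Finset.mem_range]
      omega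
    have hsum : ∑ i ∈ Finset.range (n+1), (D i).card ≤ n := by
      rw [← Finset.add_sum_erase _ _ hmem, hi0', zero_add]
      calc ∑ i ∈ (Finset.range (n+1)).erase i0, (D i).card
          ≤ ∑ _i ∈ (Finset.range (n+1)).erase i0, 1 :=
            Finset.sum_le_sum (fun i _ => hDcard i)
        _ = n := by
            rw [Finset.sum_const, smul_eq_mul, mul_one, Finset.card_erase_of_mem hmem,
              Finset.card_range]
            omega
    rw [Finset.card_univ] at hle
    omega
  -- the explicit colouring
  have hKpos : 0 < 2 * n := by omega
  haveI : NeZero (2 * n) := ⟨by omega⟩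
  set cp : V → V → ZMod (2 * n) := fun v w =>
    if G.dist r w = G.dist r v + 1 then ((G.dist r v : ℕ) : ZMod (2 * n))
    else ((2 * n - 1 - G.dist r w : ℕ) : ZMod (2 * n)) with hcp
  have hsingle : ∀ a b : V, G.dist r a = G.dist r b → a = b := by
    intro a b hab
    have h1 : a ∈ D (G.dist r a) := (hmemD _ _).mpr rfl
    have h2 : b ∈ D (G.dist r a) := (hmemD _ _).mpr hab.symm
    exact Finset.card_le_one.mp (hDcard (G.dist r a)) a h1 b h2
  refine ⟨hKpos, cp, ?_, ?_⟩
  · intro j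
    set t := j.val with htv
    have htK : t < 2 * n := j.val_lt
    by_cases htn : t < n
    · obtain ⟨v, hv⟩ := hnonempty (t+1) (by omega)
      rw [hmemD] at hv
      obtain ⟨u, hu, hdu⟩ := hpred v (by omega)
      refine ⟨u, v, hu, ?_⟩
      have hcpv : cp u v = ((G.dist r u : ℕ) : ZMod (2 * n)) := by
        rw [hcp]
        simp only
        rw [if_pos (by omega)]
      rw [hcpv, show G.dist r u = t from by omega]
      exact ZMod.natCast_zmod_val j
    · obtain ⟨v, hv⟩ := hnonempty (2 * n - 1 - t + 1) (by omega)
      rw [hmemD] at hv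
      obtain ⟨u, hu, hdu⟩ := hpred v (by omega)
      refine ⟨v, u, hu.symm, ?_⟩
      have hcpv : cp v u = ((2 * n - 1 - G.dist r u : ℕ) : ZMod (2 * n)) := by
        rw [hcp]
        simp only
        rw [if_neg (by omega)]
      rw [hcpv, show 2 * n - 1 - G.dist r u = t from by omega]
      exact ZMod.natCast_zmod_val j
  · intro v w z hvw hwz hzv
    have hvw' := hadj_dist v w hvw
    have hwz' := hadj_dist w z hwz
    rcases hvw' with hA | hB
    · rcases hwz' with hC | hDig
      · show cp w z = cp v w + 1
        rw [hcp]
        simp only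
        rw [if_pos hC, if_pos hA, hA]
        push_cast
        ring
      · exact absurd (hsingle z v (by omega)) hzv
    · rcases hwz' with hC | hDig
      · exact absurd (hsingle z v (by omega)) hzv
      · show cp w z = cp v w + 1
        rw [hcp]
        simp only
        rw [if_neg (by omega), if_neg (by omega)]
        have hb : G.dist r w ≤ n := hdbound w
        have harith : (2 * n - 1 - G.dist r w) + 1 = 2 * n - 1 - G.dist r z := by omega
        rw [← harith]
        push_cast
        ring
end PathCase

end CircAux

open CircAux in
/-- if `G` is connected with at least one edge and not an extended star,
then `χᵒ(G)` is even iff `χ(G) = 2`. -/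
theorem stmt_9 {V : Type*} [Fintype V] (G : SimpleGraph V) [DecidableRel G.Adj]
    (hG : G.Connected) (he : G.edgeSet.Nonempty) (hstar : ¬ IsExtendedStar G) :
    Even (chiO G) ↔ G.chromaticNumber = 2 := by
  classical
  obtain ⟨e0, he0⟩ := he
  obtain ⟨v0, w0, hvw0⟩ : ∃ v w, G.Adj v w := by
    induction e0 using Sym2.ind with
    | _ x y => exact ⟨x, y, (G.mem_edgeSet).mp he0⟩
  set S := {k | CircularlyPartite G k} with hS
  have hbound : ∀ k ∈ S, k ≤ Fintype.card G.Dart := by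
    intro k hk
    obtain ⟨hkpos, c, hsurj, hc⟩ := hk
    haveI : NeZero k := ⟨by omega⟩
    choose f g hadj hval using hsurj
    have hinj : Function.Injective (fun j : ZMod k => (⟨(f j, g j), hadj j⟩ : G.Dart)) := by
      intro a b hab
      have h0 := congrArg SimpleGraph.Dart.toProd hab
      have h1 : f a = f b := congrArg Prod.fst h0
      have h2 : g a = g b := congrArg Prod.snd h0
      rw [← hval a, ← hval b, h1, h2]
    calc k = Fintype.card (ZMod k) := (ZMod.card k).symm
      _ ≤ Fintype.card G.Dart := Fintype.card_le_of_injective _ hinj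
  have h1S : (1 : ℕ) ∈ S :=
    ⟨one_pos, fun _ _ => 0, fun j => ⟨v0, w0, hvw0, Subsingleton.elim _ _⟩,
      fun _ _ _ _ _ _ => Subsingleton.elim _ _⟩
  have hbdd : BddAbove S := ⟨Fintype.card G.Dart, fun k hk => hbound k hk⟩
  have hchiO : chiO G = sSup S := rfl
  have hk₀S : chiO G ∈ S := by rw [hchiO]; exact Nat.sSup_mem ⟨1, h1S⟩ hbdd
  set k₀ := chiO G with hk0def
  have hk₀mem : k₀ ∈ S := hk₀S
  have hk₀pos : 0 < k₀ := hk₀mem.1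
  obtain ⟨-, c, hcsurj, hc⟩ := hk₀S
  constructor
  · -- Even k₀ → χ = 2
    intro heven
    have hcol2 : G.Colorable 2 := by
      by_contra hncol
      obtain ⟨r⟩ : Nonempty V := hG.nonempty
      have hbad : ∃ v w, G.Adj v w ∧ G.dist r v % 2 = G.dist r w % 2 := by
        by_contra hno
        push_neg at hno
        apply hncol
        have hproper : ∀ {v w : V}, G.Adj v w →
            (decide (G.dist r v % 2 = 0)) ≠ (decide (G.dist r w % 2 = 0)) := by
          intro v w hvw
          have h := hno v w hvw
          have h1 := Nat.mod_two_eq_zero_or_one (G.dist r v)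
          have h2 := Nat.mod_two_eq_zero_or_one (G.dist r w)
          rcases h1 with h1 | h1 <;> rcases h2 with h2 | h2 <;> simp [h1, h2] at h ⊢
        have C : G.Coloring Bool := SimpleGraph.Coloring.mk _ hproper
        have := C.colorable
        simpa using this
      obtain ⟨v, w, hvw, hpar⟩ := hbad
      obtain ⟨pv, hpv⟩ := (hG.preconnected r v).exists_walk_length_eq_dist
      obtain ⟨pw, hpw⟩ := (hG.preconnected r w).exists_walk_length_eq_dist
      have hoddW : Odd (pv.append (SimpleGraph.Walk.cons hvw pw.reverse)).length := by
        rw [SimpleGraph.Walk.length_append, SimpleGraph.Walk.length_cons,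
          SimpleGraph.Walk.length_reverse, hpv, hpw, Nat.odd_iff]
        omega
      obtain ⟨a, W, hodd, h3, hnb, hwrap⟩ := exists_nb_odd_closed ⟨r, _, hoddW⟩
      have hdvd := closed_dvd hc W h3 hnb hwrap
      have h2dvd : 2 ∣ W.length := dvd_trans (even_iff_two_dvd.mp heven) hdvd
      rw [Nat.odd_iff] at hodd
      omega
    have hle : G.chromaticNumber ≤ 2 := by
      have := hcol2.chromaticNumber_le
      simpa using this
    have hlt : 1 < G.chromaticNumber := by
      by_contra hle1
      push_neg at hle1
      have hcol1 : G.Colorable 1 :=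
        SimpleGraph.chromaticNumber_le_iff_colorable.mp (by simpa using hle1)
      obtain ⟨C⟩ := hcol1
      exact (C.valid hvw0) (Subsingleton.elim _ _)
    refine le_antisymm hle ?_
    have := Order.add_one_le_of_lt hlt
    simpa [one_add_one_eq_two] using this
  · -- χ = 2 → Even k₀
    intro hchi
    have hcol2 : G.Colorable 2 := by
      rw [← SimpleGraph.chromaticNumber_le_iff_colorable, hchi]
      simp
    obtain ⟨C⟩ := hcol2
    set s : V → ZMod 2 := fun v => if C v = 0 then 0 else 1 with hsdef
    have hs : ∀ v w, G.Adj v w → s w = s v + 1 := by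
      intro v w hvw
      have hkey : ∀ a b : Fin 2, a ≠ b →
          ((if b = 0 then (0 : ZMod 2) else 1) = (if a = 0 then (0 : ZMod 2) else 1) + 1) := by
        decide
      exact hkey _ _ (C.valid hvw)
    by_contra hne
    have hodd : Odd k₀ := Nat.not_even_iff_odd.mp hne
    haveI : NeZero k₀ := ⟨by omega⟩
    haveI : NeZero (2 * k₀) := ⟨by omega⟩
    have hcop : Nat.Coprime 2 k₀ := Nat.coprime_two_left.mpr hodd
    set e := ZMod.chineseRemainder hcop with he'
    set c' : V → V → ZMod (2 * k₀) := fun v w => e.symm (s v, c v w) with hc'def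
    have hc' : ∀ v w z, G.Adj v w → G.Adj w z → z ≠ v → c' w z = c' v w + 1 := by
      intro v w z h1 h2 h3
      rw [hc'def]
      simp only
      rw [hc v w z h1 h2 h3, hs v w h1]
      have hpair : ((s v + 1 : ZMod 2), (c v w + 1 : ZMod k₀)) =
          ((s v, c v w) + 1 : ZMod 2 × ZMod k₀) := rfl
      rw [hpair, map_add, map_one]
    have hcontra : (2 * k₀) ∈ S → False := by
      intro h2k
      have hle2 := le_csSup hbdd h2k
      rw [← hchiO] at hle2
      omega
    by_cases hac : G.IsAcyclic
    · have htree : G.IsTree := ⟨hG, hac⟩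
      by_cases hdeg3 : ∃ u, 3 ≤ G.degree u
      · obtain ⟨u₁, hu₁⟩ := hdeg3
        have hex2 : ∃ u₂, (3 ≤ G.degree u₂) ∧ u₂ ≠ u₁ := by
          by_contra hno
          push_neg at hno
          exact hstar ⟨htree, u₁, hu₁, fun y hy => hno y hy⟩
        obtain ⟨u₂, hu₂, hne12⟩ := hex2
        obtain ⟨W0⟩ := hG.preconnected u₁ u₂
        set P := W0.bypass with hP'
        have hPp : P.IsPath := W0.bypass_isPath
        have hm : 0 < P.length := by
          rcases Nat.eq_zero_or_pos P.length with h0 | h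
          · exact absurd (SimpleGraph.Walk.eq_of_length_eq_zero h0).symm hne12
          · exact h
        obtain ⟨x, hx⟩ : ∃ x, G.Adj u₁ x :=
          (G.degree_pos_iff_exists_adj u₁).mp (by omega)
        have hx' : G.Adj x u₁ := hx.symm
        have hbv := branch_values hc hu₁ hu₂ hx' P hPp hm
        have hbv' := branch_values hc' hu₁ hu₂ hx' P hPp hm
        have hdvd : k₀ ∣ 2 * P.length := (ZMod.natCast_eq_zero_iff _ _).mp hbv.2
        have hcop' : Nat.Coprime k₀ 2 := Nat.coprime_two_right.mpr hodd
        have hdvdm : k₀ ∣ P.length := hcop'.dvd_of_dvd_mul_left hdvd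
        have hk₀m : k₀ ≤ P.length := Nat.le_of_dvd hm hdvdm
        apply hcontra
        refine ⟨by omega, c', ?_, hc'⟩
        intro j
        set t := (j - (c' x u₁ + 1)).val with ht'
        have htlt : t < 2 * k₀ := ZMod.val_lt _
        obtain ⟨v, w, hadj, hval⟩ := hbv'.1 t (by omega)
        refine ⟨v, w, hadj, ?_⟩
        rw [hval]
        have hcast : ((t : ℕ) : ZMod (2 * k₀)) = j - (c' x u₁ + 1) :=
          ZMod.natCast_zmod_val _
        rw [hcast]
        ring
      · push_neg at hdeg3
        have hcard2 : 2 ≤ Fintype.card V :=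
          Fintype.one_lt_card_iff_nontrivial.mpr ⟨v0, w0, hvw0.ne⟩
        have h2mem := path_case hG htree (fun u => by have := hdeg3 u; omega) hcard2 hs
        have hup : k₀ ≤ 2 * (Fintype.card V - 1) := by
          have hb := hbound k₀ hk₀mem
          rw [SimpleGraph.dart_card_eq_twice_card_edges] at hb
          have hedges := htree.card_edgeFinset
          omega
        have hlow : 2 * (Fintype.card V - 1) ≤ k₀ := by
          have := le_csSup hbdd (show (2 * (Fintype.card V - 1)) ∈ S from h2mem)
          rwa [← hchiO] at this
        have hk0eq : k₀ = 2 * (Fintype.card V - 1) := le_antisymm hup hlow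
        exact hne (by rw [hk0eq]; exact even_two_mul _)
    · have hex : ∃ (a : V) (W : G.Walk a a), W.IsCycle := by
        by_contra hno
        push_neg at hno
        exact hac (fun a W => hno a W)
      obtain ⟨a, W, hWc⟩ := hex
      have h3 := hWc.three_le_length
      have hnb := cycle_nb hWc
      have hwrap := cycle_wrap hWc
      have hdvd := closed_dvd hc W h3 hnb hwrap
      have h2dvd : 2 ∣ W.length := by
        have hc2 : ∀ v w z, G.Adj v w → G.Adj w z → z ≠ v →
            (fun v (_ : V) => s v) w z = (fun v (_ : V) => s v) v w + 1 := by
          intro v w z h1 _ _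
          simp only
          exact hs v w h1
        exact closed_dvd hc2 W h3 hnb hwrap
      have h2k : 2 * k₀ ∣ W.length := Nat.Coprime.mul_dvd_of_dvd_of_dvd hcop h2dvd hdvd
      have hlen : 2 * k₀ ≤ W.length := Nat.le_of_dvd (by omega) h2k
      apply hcontra
      refine ⟨by omega, c', ?_, hc'⟩
      intro j
      set t := (j - c' (W.getVert 0) (W.getVert 1)).val with ht'
      have htlt : t < 2 * k₀ := ZMod.val_lt _
      have hadv := advance hc' W hnb t (by omega)
      refine ⟨W.getVert t, W.getVert (t+1), W.adj_getVert_succ (by omega), ?_⟩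
      rw [hadv]
      have hcast : ((t : ℕ) : ZMod (2 * k₀)) = j - c' (W.getVert 0) (W.getVert 1) :=
        ZMod.natCast_zmod_val _
      rw [hcast]
      ring
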